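/- Let P be a poset with least element 0, let Z be a Z-modular lower complete sublattice of P which is P-central, and let I ⊆ P be Z-complete. Then c_Z I = {c_Z(p) : p ∈ I} is a complete ideal of the subposet Z. -/
import Mathlib


/-- `S` is `Z`-disjoint: there is `f : S → Z` with `p ≤ f p` and `f p ∧ f q = 0`
for distinct `p, q ∈ S`. -/
def ZDisjoint {β : Type*} [PartialOrder β] [OrderBot β] (Z S : Set β) : Prop :=
  ∃ f : β → β, (∀ p ∈ S, f p ∈ Z ∧ p ≤ f p) ∧
    ∀ p ∈ S, ∀ q ∈ S, p ≠ q → Disjoint (f p) (f q)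

/-- `I` is `Z`-complete: every `Z`-disjoint `S ⊆ I` has a supremum lying in `I`, and
whenever `{p, q}` is `Z`-disjoint with supremum in `I`, both `p` and `q` lie in `I`. -/
def ZComplete {β : Type*} [PartialOrder β] [OrderBot β] (Z I : Set β) : Prop :=
  (∀ S ⊆ I, ZDisjoint Z S → ∃ s, IsLUB S s ∧ s ∈ I) ∧
  (∀ p q s, ZDisjoint Z {p, q} → IsLUB {p, q} s → s ∈ I → p ∈ I ∧ q ∈ I)

/-- `Z` is `S`-central: for every `p ∈ S` and `y ∈ Z` there is `z ∈ Z` with `y ∧ z = 0`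
and `p` the supremum of some `q ≤ y` and `r ≤ z`. -/
def SCentral {β : Type*} [PartialOrder β] [OrderBot β] (Z S : Set β) : Prop :=
  ∀ p ∈ S, ∀ y ∈ Z, ∃ z ∈ Z, Disjoint y z ∧ ∃ q r, q ≤ y ∧ r ≤ z ∧ IsLUB {q, r} p
/-- `Z` is `Z`-modular: whenever `y, z ∈ Z` with `y ∧ z = 0`, `p, q ∈ Z` with `p ≤ y`,
`q ≤ z` and `p, q` have a least upper bound `s` within the subposet `Z`, then `q` is the
greatest lower bound within `Z` of `z` and `s`. -/
def ZModular {β : Type*} [PartialOrder β] [OrderBot β] (Z : Set β) : Prop :=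
  ∀ y ∈ Z, ∀ z ∈ Z, Disjoint y z → ∀ p ∈ Z, ∀ q ∈ Z, p ≤ y → q ≤ z →
    ∀ s ∈ Z, (p ≤ s ∧ q ≤ s ∧ ∀ w ∈ Z, p ≤ w → q ≤ w → s ≤ w) →
      (q ≤ s ∧ ∀ w ∈ Z, w ≤ z → w ≤ s → w ≤ q)
/-- If `Z` is a `Z`-modular lower complete sublattice of `P` which is `P`-central and
`I` is `Z`-complete, then `c_Z I` is a complete ideal of the subposet `Z`: a lower set
in `Z` that is completely upwards directed. -/
theorem stmt9 {α : Type*} [PartialOrder α] [OrderBot α] (Z I : Set α) (c : α → α)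
    (hZl : ∀ S ⊆ Z, ∃ i, IsGLB S i ∧ i ∈ Z)
    (hc : ∀ p, c p ∈ Z ∧ IsGLB {z | z ∈ Z ∧ p ≤ z} (c p))
    (hcen : SCentral Z Set.univ) (hzm : ZModular Z)
    (hI : ZComplete Z I) :
    (∀ p ∈ Z, ∀ q ∈ c '' I, p ≤ q → p ∈ c '' I) ∧
    (∀ S ⊆ c '' I, ∃ q ∈ c '' I, ∀ p ∈ S, p ≤ q) := by
  classical
  obtain ⟨hI1, hI2⟩ := hI
  -- basic facts about the cover c
  have hpc : ∀ p : α, p ≤ c p := fun p => (hc p).2.2 (fun z hz => hz.2)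
  have hcz : ∀ p z, z ∈ Z → p ≤ z → c p ≤ z := fun p z hz h => (hc p).2.1 ⟨hz, h⟩
  -- membership of both summands of a central decomposition of an element of I
  have pairI : ∀ p₀ ∈ I, ∀ x ∈ Z, ∀ z ∈ Z, Disjoint x z → ∀ q r, q ≤ x → r ≤ z →
      IsLUB {q, r} p₀ → q ∈ I ∧ r ∈ I := by
    intro p₀ hp₀ x hx z hz hdisj q r hqx hrz hlub
    refine hI2 q r p₀ ⟨fun t => if t = q then x else z, ?_, ?_⟩ hlub hp₀
    · intro t ht
      by_cases h : t = q
      · dsimp only; rw [if_pos h]; subst h; exact ⟨hx, hqx⟩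
      · dsimp only; rw [if_neg h]
        have htr : t = r := by
          simp only [Set.mem_insert_iff, Set.mem_singleton_iff] at ht
          rcases ht with h' | h'
          · exact absurd h' h
          · exact h'
        subst htr; exact ⟨hz, hrz⟩
    · intro a ha b hb hab
      simp only [Set.mem_insert_iff, Set.mem_singleton_iff] at ha hb
      rcases ha with rfl | rfl <;> rcases hb with rfl | rfl
      · exact absurd rfl hab
      · have hbq : b ≠ a := fun h => hab h.symm
        dsimp only; rw [if_pos rfl, if_neg hbq]; exact hdisj
      · dsimp only; rw [if_neg hab, if_pos rfl]; exact hdisj.symm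
      · exact absurd rfl hab
  -- Part 1: c '' I is a lower set in Z
  have part1 : ∀ x ∈ Z, ∀ p₀ ∈ I, x ≤ c p₀ → ∃ u ∈ I, c u = x := by
    intro x hx p₀ hp₀ hxc
    obtain ⟨z, hzZ, hdisj, q, r, hqx, hrz, hlub⟩ := hcen p₀ (Set.mem_univ p₀) x hx
    obtain ⟨hqI, hrI⟩ := pairI p₀ hp₀ x hx z hzZ hdisj q r hqx hrz hlub
    refine ⟨q, hqI, le_antisymm (hcz q x hx hqx) ?_⟩
    have hq_p0 : q ≤ p₀ := hlub.1 (Set.mem_insert q _)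
    have hr_p0 : r ≤ p₀ := hlub.1 (by simp)
    have hcq_cp : c q ≤ c p₀ := hcz q (c p₀) (hc p₀).1 (hq_p0.trans (hpc p₀))
    have hcr_cp : c r ≤ c p₀ := hcz r (c p₀) (hc p₀).1 (hr_p0.trans (hpc p₀))
    have hmin : ∀ w ∈ Z, c r ≤ w → c q ≤ w → c p₀ ≤ w := by
      intro w hw h1 h2
      refine hcz p₀ w hw (hlub.2 ?_)
      intro t ht
      simp only [Set.mem_insert_iff, Set.mem_singleton_iff] at ht
      rcases ht with rfl | rfl
      · exact (hpc t).trans h2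
      · exact (hpc t).trans h1
    obtain ⟨-, hglb⟩ := hzm z hzZ x hx hdisj.symm (c r) (hc r).1 (c q) (hc q).1
      (hcz r z hzZ hrz) (hcz q x hx hqx) (c p₀) (hc p₀).1 ⟨hcr_cp, hcq_cp, hmin⟩
    exact hglb x hx le_rfl hxc
  constructor
  · intro x hx y hy hxy
    obtain ⟨p₀, hp₀, rfl⟩ := hy
    obtain ⟨u, hu, hcu⟩ := part1 x hx p₀ hp₀ hxy
    exact ⟨u, hu, hcu⟩
  -- Part 2: completely upwards directed
  · intro S hS
    set 𝒜 : Set (Set α) := {A | A ⊆ I ∧ ∀ a ∈ A, ∀ b ∈ A, a ≠ b → Disjoint (c a) (c b)}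
      with h𝒜
    obtain ⟨A, hA⟩ : ∃ A, Maximal (· ∈ 𝒜) A := by
      apply zorn_subset
      intro ch hch hchain
      refine ⟨⋃₀ ch, ⟨?_, ?_⟩, fun s hs => Set.subset_sUnion_of_mem hs⟩
      · intro a ha
        obtain ⟨t, htc, hat⟩ := ha
        exact (hch htc).1 hat
      · intro a ha b hb hab
        obtain ⟨t, htc, hat⟩ := ha
        obtain ⟨u, huc, hbu⟩ := hb
        rcases hchain.total htc huc with h | h
        · exact (hch huc).2 a (h hat) b hbu hab
        · exact (hch htc).2 a hat b (h hbu) hab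
    obtain ⟨hAI, hAd⟩ := hA.1
    obtain ⟨p, hplub, hpI⟩ := hI1 A hAI
      ⟨c, fun a ha => ⟨(hc a).1, hpc a⟩, fun a ha b hb hab => hAd a ha b hb hab⟩
    refine ⟨c p, ⟨p, hpI, rfl⟩, ?_⟩
    intro s hs
    obtain ⟨p₀, hp₀, rfl⟩ := hS hs
    obtain ⟨z, hzZ, hdisj, q, r, hqv, hrz, hlub⟩ := hcen p₀ (Set.mem_univ p₀) (c p) (hc p).1
    obtain ⟨hqI, hrI⟩ := pairI p₀ hp₀ (c p) (hc p).1 z hzZ hdisj q r hqv hrz hlub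
    -- r can be added to the maximal family A, hence r = ⊥
    have hrA : r ∈ A := by
      have hmem : A ∪ {r} ∈ 𝒜 := by
        constructor
        · intro a ha
          rcases ha with ha | ha
          · exact hAI ha
          · rw [Set.mem_singleton_iff] at ha; subst ha; exact hrI
        · intro a ha b hb hab
          have key : ∀ a' ∈ A, Disjoint (c a') (c r) := by
            intro a' ha'
            have h1 : c a' ≤ c p := hcz a' (c p) (hc p).1 ((hplub.1 ha').trans (hpc p))
            exact Disjoint.mono h1 (hcz r z hzZ hrz) hdisj
          rcases ha with ha | ha <;> rcases hb with hb | hb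
          · exact hAd a ha b hb hab
          · rw [Set.mem_singleton_iff] at hb; subst hb; exact key a ha
          · rw [Set.mem_singleton_iff] at ha; subst ha; exact (key b hb).symm
          · rw [Set.mem_singleton_iff] at ha hb; exact absurd (ha.trans hb.symm) hab
      have := hA.2 hmem Set.subset_union_left
      exact this (Set.mem_union_right A rfl)
    have hrbot : r = ⊥ := by
      have h1 : c r ≤ c p := hcz r (c p) (hc p).1 ((hplub.1 hrA).trans (hpc p))
      have h2 : c r ≤ z := hcz r z hzZ hrz
      have : c r ≤ ⊥ := hdisj h1 h2
      exact le_bot_iff.mp ((hpc r).trans this)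
    -- hence p₀ = q ≤ c p
    have hp₀q : p₀ ≤ q := by
      refine hlub.2 ?_
      intro t ht
      simp only [Set.mem_insert_iff, Set.mem_singleton_iff] at ht
      rcases ht with rfl | rfl
      · exact le_rfl
      · rw [hrbot]; exact bot_le
    exact hcz p₀ (c p) (hc p).1 (hp₀q.trans hqv)
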